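/- Subadditivity of the finite-volume conductivity functional: with ν̄(ρ,Λ,p) defined as the infimum over v ∈ ℓ_{p,Λ⁺} + F_0(Λ⁻) of (1/(2χ(ρ)|Λ|)) Σ_{b∈Λ̄*} E_ρ[(1/2) c_b (π_b v)²], for any partition of a finite set Λ ⊂ Z^d into disjoint subsets Λ = Λ_1 ⊔ ⋯ ⊔ Λ_m one has ν̄(ρ,Λ,p) ≤ Σ_{i=1}^m (|Λ_i|/|Λ|) ν̄(ρ,Λ_i,p). In particular, for triadic cubes □_n = (−3^n/2, 3^n/2)^d ∩ Z^d, the sequence n ↦ ν̄(ρ,□_n,p) is nonincreasing. -/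

import Mathlib

open MeasureTheory

/-- `μ` is the Bernoulli(ρ) product measure on `{0,1}^{ℤᵈ}`. -/
def IsBernoulliProduct {d : ℕ} (ρ : ℝ) (μ : Measure ((Fin d → ℤ) → Bool)) : Prop :=
  IsProbabilityMeasure μ ∧
    ∀ (s : Finset (Fin d → ℤ)) (b : (Fin d → ℤ) → Bool),
      μ {η | ∀ x ∈ s, η x = b x} = ∏ x ∈ s, ENNReal.ofReal (if b x then ρ else 1 - ρ)

/-- The `i`-th coordinate unit vector of `ℤᵈ`. -/
def unitVec (d : ℕ) (i : Fin d) : Fin d → ℤ := fun j => if j = i then 1 else 0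

/-- The interior `Λ⁻ = Λ \ ∂Λ`. -/
def interiorF {d : ℕ} (Λ : Finset (Fin d → ℤ)) : Finset (Fin d → ℤ) :=
  Λ.filter fun x => ∀ i : Fin d, x + unitVec d i ∈ Λ ∧ x - unitVec d i ∈ Λ

/-- The enlarged set `Λ⁺ = Λ ∪ ⋃_{i=1}^d (Λ + e_i)`. -/
def plusF {d : ℕ} (Λ : Finset (Fin d → ℤ)) : Finset (Fin d → ℤ) :=
  Λ ∪ Finset.univ.biUnion fun i : Fin d => Λ.image (· + unitVec d i)

/-- The exchange `η^{x,y}`. -/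
def exchange {d : ℕ} (x y : Fin d → ℤ) (η : (Fin d → ℤ) → Bool) : (Fin d → ℤ) → Bool :=
  fun z => if z = x then η y else if z = y then η x else η z

/-- The affine function `ℓ_{p,Λ⁺}(η) = Σ_{x∈Λ⁺} (p·x) η_x`. -/
def affineFn {d : ℕ} (Λplus : Finset (Fin d → ℤ)) (p : Fin d → ℝ) :
    ((Fin d → ℤ) → Bool) → ℝ :=
  fun η => ∑ x ∈ Λplus, (∑ i, p i * (x i : ℝ)) * (if η x then (1 : ℝ) else 0)

/-- The normalized Dirichlet energy
`(1/(2χ(ρ)|Λ|)) Σ_{b∈Λ̄*} E_ρ[(1/2) c_b (π_b v)²]`, with the enlarged bond set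
`Λ̄* = {{x, x+e_i} : x ∈ Λ, 1 ≤ i ≤ d}` indexed by pairs `(x, i)`, `x ∈ Λ`. -/
noncomputable def dirichletEnergy {d : ℕ} (ρ : ℝ) (μ : Measure ((Fin d → ℤ) → Bool))
    (c : (Fin d → ℤ) → Fin d → ((Fin d → ℤ) → Bool) → ℝ)
    (Λ : Finset (Fin d → ℤ)) (v : ((Fin d → ℤ) → Bool) → ℝ) : ℝ :=
  (1 / (2 * (ρ * (1 - ρ)) * (Λ.card : ℝ))) *
    ∑ x ∈ Λ, ∑ i : Fin d,
      ∫ η, (1 / 2) * c x i η * (v (exchange x (x + unitVec d i) η) - v η) ^ 2 ∂μ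

/-- `ν̄(ρ,Λ,p) = inf_{v ∈ ℓ_{p,Λ⁺} + F₀(Λ⁻)} (1/(2χ(ρ)|Λ|)) Σ_{b∈Λ̄*} E_ρ[(1/2)c_b(π_b v)²]`. -/
noncomputable def nubar {d : ℕ} (ρ : ℝ) (μ : Measure ((Fin d → ℤ) → Bool))
    (c : (Fin d → ℤ) → Fin d → ((Fin d → ℤ) → Bool) → ℝ)
    (Λ : Finset (Fin d → ℤ)) (p : Fin d → ℝ) : ℝ :=
  sInf {r : ℝ | ∃ g : ((Fin d → ℤ) → Bool) → ℝ,
    (∀ η η', (∀ x ∈ interiorF Λ, η x = η' x) → g η = g η') ∧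
    r = dirichletEnergy ρ μ c Λ (fun η => affineFn (plusF Λ) p η + g η)}

/-- The discrete triadic cube `□_n = (−3ⁿ/2, 3ⁿ/2)^d ∩ ℤ^d`. -/
noncomputable def triadicCubeF (d n : ℕ) : Finset (Fin d → ℤ) :=
  Fintype.piFinset fun _ : Fin d =>
    (Finset.Icc (-(3 ^ n : ℤ)) (3 ^ n : ℤ)).filter fun k =>
      -(3 ^ n : ℤ) < 2 * k ∧ 2 * k < (3 ^ n : ℤ)

namespace Nsub

variable {d : ℕ}

lemma ne_add_unitVec (x : Fin d → ℤ) (i : Fin d) : x ≠ x + unitVec d i := by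
  intro h
  have := congrFun h i
  simp [unitVec] at this

lemma add_sub_unitVec (x : Fin d → ℤ) (i : Fin d) : x + unitVec d i - unitVec d i = x := by
  funext j; simp

lemma mem_plusF_self {Λ : Finset (Fin d → ℤ)} {x} (hx : x ∈ Λ) : x ∈ plusF Λ :=
  Finset.mem_union_left _ hx

lemma mem_plusF_add {Λ : Finset (Fin d → ℤ)} {x} (hx : x ∈ Λ) (i : Fin d) :
    x + unitVec d i ∈ plusF Λ := by
  refine Finset.mem_union_right _ ?_
  exact Finset.mem_biUnion.2 ⟨i, Finset.mem_univ i, Finset.mem_image.2 ⟨x, hx, rfl⟩⟩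

lemma interiorF_subset (Λ : Finset (Fin d → ℤ)) : interiorF Λ ⊆ Λ := Finset.filter_subset _ _

lemma interiorF_mono {Λ' Λ : Finset (Fin d → ℤ)} (h : Λ' ⊆ Λ) : interiorF Λ' ⊆ interiorF Λ := by
  intro x hx
  rw [interiorF, Finset.mem_filter] at hx ⊢
  exact ⟨h hx.1, fun i => ⟨h (hx.2 i).1, h (hx.2 i).2⟩⟩

/-- gradient of affine function along an exchange of two members -/
lemma affine_exchange_sub (A : Finset (Fin d → ℤ)) (p : Fin d → ℝ) {x y : Fin d → ℤ}
    (hx : x ∈ A) (hy : y ∈ A) (hxy : x ≠ y) (η : (Fin d → ℤ) → Bool) :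
    affineFn A p (exchange x y η) - affineFn A p η =
      ((∑ i, p i * (x i : ℝ)) - (∑ i, p i * (y i : ℝ))) *
        ((if η y then (1:ℝ) else 0) - (if η x then (1:ℝ) else 0)) := by
  classical
  unfold affineFn
  rw [← Finset.sum_sub_distrib]
  have hsub : ({x, y} : Finset (Fin d → ℤ)) ⊆ A := by
    intro z hz; rcases Finset.mem_insert.1 hz with rfl | hz
    · exact hx
    · rw [Finset.mem_singleton] at hz; subst hz; exact hy
  rw [← Finset.sum_subset hsub]
  · rw [Finset.sum_insert (by simpa using hxy), Finset.sum_singleton]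
    simp only [exchange, if_pos rfl, if_neg hxy.symm, if_true]
    ring
  · intro z _ hz
    simp only [Finset.mem_insert, Finset.mem_singleton, not_or] at hz
    simp only [exchange, if_neg hz.1, if_neg hz.2, sub_self]

/-- a function local to `s` is unchanged by an exchange outside `s` -/
lemma local_exchange {s : Finset (Fin d → ℤ)} {g : ((Fin d → ℤ) → Bool) → ℝ}
    (hg : ∀ η η', (∀ x ∈ s, η x = η' x) → g η = g η') {x y : Fin d → ℤ}
    (hx : x ∉ s) (hy : y ∉ s) (η : (Fin d → ℤ) → Bool) :
    g (exchange x y η) = g η := by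
  refine hg _ _ fun z hz => ?_
  have hzx : z ≠ x := fun h => hx (h ▸ hz)
  have hzy : z ≠ y := fun h => hy (h ▸ hz)
  simp [exchange, hzx, hzy]


variable {d : ℕ}

lemma measurable_local {s : Finset (Fin d → ℤ)} {g : ((Fin d → ℤ) → Bool) → ℝ}
    (hg : ∀ η η', (∀ x ∈ s, η x = η' x) → g η = g η') : Measurable g := by
  classical
  have : g = (fun b : {x // x ∈ s} → Bool =>
      g (fun y => if hy : y ∈ s then b ⟨y, hy⟩ else false)) ∘
      (fun η (x : {x // x ∈ s}) => η (x : Fin d → ℤ)) := by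
    funext η
    exact (hg _ _ (fun x hx => by simp [hx])).symm
  rw [this]
  exact (measurable_of_countable _).comp
    (measurable_pi_lambda _ fun x => measurable_pi_apply _)

lemma measurable_affineFn (A : Finset (Fin d → ℤ)) (p : Fin d → ℝ) :
    Measurable (affineFn A p) := by
  unfold affineFn
  refine Finset.measurable_sum _ fun x _ => ?_
  exact ((measurable_of_countable (fun t : Bool => if t then (1:ℝ) else 0)).comp
    (measurable_pi_apply x)).const_mul _

lemma measurable_exchange (x y : Fin d → ℤ) :
    Measurable (exchange x y : ((Fin d → ℤ) → Bool) → (Fin d → ℤ) → Bool) := by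
  refine measurable_pi_lambda _ fun z => ?_
  have e : (fun η : (Fin d → ℤ) → Bool => exchange x y η z) =
      fun η => if z = x then η y else if z = y then η x else η z := rfl
  rw [e]
  by_cases h1 : z = x
  · simp only [h1, if_pos rfl]
    exact measurable_pi_apply (X := fun _ : Fin d → ℤ => Bool) y
  · by_cases h2 : z = y
    · simp only [if_neg h1, if_pos h2]
      exact measurable_pi_apply (X := fun _ : Fin d → ℤ => Bool) x
    · simp only [if_neg h1, if_neg h2]
      exact measurable_pi_apply (X := fun _ : Fin d → ℤ => Bool) z


variable {d : ℕ}

def shiftConf (z : Fin d → ℤ) (η : (Fin d → ℤ) → Bool) : (Fin d → ℤ) → Bool :=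
  fun y => η (z + y)

lemma measurable_shiftConf (z : Fin d → ℤ) : Measurable (shiftConf (d := d) z) :=
  measurable_pi_lambda _ fun y => measurable_pi_apply _

def cylSets (d : ℕ) : Set (Set ((Fin d → ℤ) → Bool)) :=
  {A | ∃ (s : Finset (Fin d → ℤ)) (b : (Fin d → ℤ) → Bool), A = {η | ∀ x ∈ s, η x = b x}}

lemma isPiSystem_cylSets : IsPiSystem (cylSets d) := by
  rintro A ⟨s, b, rfl⟩ B ⟨t, b', rfl⟩ hne
  classical
  obtain ⟨η0, hη0⟩ := hne
  simp only [Set.mem_inter_iff, Set.mem_setOf_eq] at hη0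
  refine ⟨s ∪ t, fun x => if x ∈ s then b x else b' x, ?_⟩
  ext η
  simp only [Set.mem_inter_iff, Set.mem_setOf_eq, Finset.mem_union]
  constructor
  · rintro ⟨h1, h2⟩ x hx
    by_cases hxs : x ∈ s
    · simp [hxs, h1 x hxs]
    · simp [hxs, h2 x (hx.resolve_left hxs)]
  · intro h
    constructor
    · intro x hx
      have := h x (Or.inl hx); simpa [hx] using this
    · intro x hx
      have := h x (Or.inr hx)
      by_cases hxs : x ∈ s
      · rw [this, if_pos hxs]
        rw [← hη0.1 x hxs, hη0.2 x hx]
      · simpa [hxs] using this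

lemma cylSets_mem_measurable {A : Set ((Fin d → ℤ) → Bool)} (hA : A ∈ cylSets d) :
    MeasurableSet A := by
  obtain ⟨s, b, rfl⟩ := hA
  have : {η : (Fin d → ℤ) → Bool | ∀ x ∈ s, η x = b x} =
      ⋂ x ∈ (s : Set (Fin d → ℤ)), (fun η => η x) ⁻¹' {b x} := by
    ext η; simp
  rw [this]
  exact MeasurableSet.biInter s.countable_toSet fun x _ =>
    (measurable_pi_apply x) (MeasurableSet.singleton _)

lemma pi_eq_generateFrom_cylSets :
    (inferInstance : MeasurableSpace ((Fin d → ℤ) → Bool)) =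
      MeasurableSpace.generateFrom (cylSets d) := by
  refine le_antisymm ?_ ?_
  · show MeasurableSpace.pi ≤ _
    refine iSup_le fun x => ?_
    intro A hA
    obtain ⟨T, -, rfl⟩ := hA
    have : (fun η : (Fin d → ℤ) → Bool => η x) ⁻¹' T =
        ⋃ t ∈ T, {η : (Fin d → ℤ) → Bool | ∀ y ∈ ({x} : Finset (Fin d → ℤ)), η y = t} := by
      ext η; simp [Set.mem_preimage]
    rw [this]
    refine MeasurableSet.biUnion T.to_countable fun t _ =>
      MeasurableSpace.measurableSet_generateFrom ⟨{x}, fun _ => t, rfl⟩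
  · exact MeasurableSpace.generateFrom_le fun A hA => cylSets_mem_measurable hA

lemma map_shiftConf_eq {ρ : ℝ} {μ : Measure ((Fin d → ℤ) → Bool)}
    (hμ : IsBernoulliProduct ρ μ) (z : Fin d → ℤ) :
    μ.map (shiftConf z) = μ := by
  classical
  haveI : IsProbabilityMeasure μ := hμ.1
  refine ext_of_generate_finite (cylSets d) pi_eq_generateFrom_cylSets isPiSystem_cylSets
    ?_ ?_
  · rintro A ⟨s, b, rfl⟩
    rw [Measure.map_apply (measurable_shiftConf z)
      (cylSets_mem_measurable ⟨s, b, rfl⟩)]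
    have hpre : shiftConf z ⁻¹' {η | ∀ x ∈ s, η x = b x} =
        {η | ∀ x ∈ s.image (z + ·), η x = b (x - z)} := by
      ext η
      simp only [Set.mem_preimage, Set.mem_setOf_eq, shiftConf, Finset.mem_image]
      constructor
      · rintro h x ⟨y, hy, rfl⟩
        have hy2 : z + y - z = y := by funext j; simp
        rw [hy2]; exact h y hy
      · intro h x hx
        have h1 := h (z + x) ⟨x, hx, rfl⟩
        have h2 : z + x - z = x := by funext j; simp
        rw [h2] at h1
        exact h1
    rw [hpre, hμ.2, hμ.2]
    rw [Finset.prod_image (by intro a _ b_ _ h; exact add_right_injective z h)]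
    refine Finset.prod_congr rfl fun x _ => ?_
    have h2 : z + x - z = x := by funext j; simp
    rw [h2]
  · have : IsProbabilityMeasure (μ.map (shiftConf z)) :=
      Measure.isProbabilityMeasure_map (measurable_shiftConf z).aemeasurable
    simp [this.measure_univ, (hμ.1).measure_univ]


end Nsub

namespace Nsub
variable {d : ℕ}

lemma energy_nonneg (ρ : ℝ) (hρ : ρ ∈ Set.Ioo (0:ℝ) 1) (μ : Measure ((Fin d → ℤ) → Bool))
    (c : (Fin d → ℤ) → Fin d → ((Fin d → ℤ) → Bool) → ℝ)
    (hc : ∀ x i η, 1 ≤ c x i η) (Λ : Finset (Fin d → ℤ)) (v : ((Fin d → ℤ) → Bool) → ℝ) :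
    0 ≤ dirichletEnergy ρ μ c Λ v := by
  unfold dirichletEnergy
  have h1 : 0 ≤ 1 / (2 * (ρ * (1 - ρ)) * (Λ.card : ℝ)) := by
    have hA : (0:ℝ) < ρ := hρ.1
    have hB : ρ < 1 := hρ.2
    have hcard : (0:ℝ) ≤ (Λ.card : ℝ) := Nat.cast_nonneg _
    have hχ : (0:ℝ) ≤ ρ * (1 - ρ) := by nlinarith
    exact one_div_nonneg.2 (mul_nonneg (mul_nonneg (by norm_num) hχ) hcard)
  refine mul_nonneg h1 (Finset.sum_nonneg fun x _ => Finset.sum_nonneg fun i _ => ?_)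
  refine integral_nonneg fun η => ?_
  have h2 := hc x i η
  have h3 : (0:ℝ) ≤ (v (exchange x (x + unitVec d i) η) - v η) ^ 2 := sq_nonneg _
  exact mul_nonneg (mul_nonneg (by norm_num) (by linarith)) h3

lemma nubarSet_nonempty (ρ : ℝ) (μ : Measure ((Fin d → ℤ) → Bool))
    (c : (Fin d → ℤ) → Fin d → ((Fin d → ℤ) → Bool) → ℝ) (Λ : Finset (Fin d → ℤ))
    (p : Fin d → ℝ) :
    {r : ℝ | ∃ g : ((Fin d → ℤ) → Bool) → ℝ,
      (∀ η η', (∀ x ∈ interiorF Λ, η x = η' x) → g η = g η') ∧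
      r = dirichletEnergy ρ μ c Λ (fun η => affineFn (plusF Λ) p η + g η)}.Nonempty :=
  ⟨_, fun _ => 0, fun _ _ _ => rfl, rfl⟩

lemma nubarSet_bddBelow (ρ : ℝ) (hρ : ρ ∈ Set.Ioo (0:ℝ) 1) (μ : Measure ((Fin d → ℤ) → Bool))
    (c : (Fin d → ℤ) → Fin d → ((Fin d → ℤ) → Bool) → ℝ)
    (hc : ∀ x i η, 1 ≤ c x i η) (Λ : Finset (Fin d → ℤ)) (p : Fin d → ℝ) :
    BddBelow {r : ℝ | ∃ g : ((Fin d → ℤ) → Bool) → ℝ,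
      (∀ η η', (∀ x ∈ interiorF Λ, η x = η' x) → g η = g η') ∧
      r = dirichletEnergy ρ μ c Λ (fun η => affineFn (plusF Λ) p η + g η)} := by
  refine ⟨0, fun r hr => ?_⟩
  obtain ⟨g, -, rfl⟩ := hr
  exact energy_nonneg ρ hρ μ c hc Λ _

lemma nubar_nonneg (ρ : ℝ) (hρ : ρ ∈ Set.Ioo (0:ℝ) 1) (μ : Measure ((Fin d → ℤ) → Bool))
    (c : (Fin d → ℤ) → Fin d → ((Fin d → ℤ) → Bool) → ℝ)
    (hc : ∀ x i η, 1 ≤ c x i η) (Λ : Finset (Fin d → ℤ)) (p : Fin d → ℝ) :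
    0 ≤ nubar ρ μ c Λ p :=
  le_csInf (nubarSet_nonempty ρ μ c Λ p) fun r hr => by
    obtain ⟨g, -, rfl⟩ := hr; exact energy_nonneg ρ hρ μ c hc Λ _

/-- the gluing identity -/
lemma energy_glue (ρ : ℝ) (hρ : ρ ∈ Set.Ioo (0:ℝ) 1) (μ : Measure ((Fin d → ℤ) → Bool))
    (c : (Fin d → ℤ) → Fin d → ((Fin d → ℤ) → Bool) → ℝ)
    (Λ : Finset (Fin d → ℤ)) (m : ℕ) (Λs : Fin m → Finset (Fin d → ℤ))
    (hdisj : Pairwise fun i j => Disjoint (Λs i) (Λs j))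
    (hcover : Λ = Finset.univ.biUnion Λs) (p : Fin d → ℝ)
    (g : Fin m → ((Fin d → ℤ) → Bool) → ℝ)
    (hg : ∀ k, ∀ η η', (∀ x ∈ interiorF (Λs k), η x = η' x) → g k η = g k η') :
    dirichletEnergy ρ μ c Λ (fun η => affineFn (plusF Λ) p η + ∑ k, g k η) =
      ∑ k, (((Λs k).card : ℝ) / (Λ.card : ℝ)) *
        dirichletEnergy ρ μ c (Λs k) (fun η => affineFn (plusF (Λs k)) p η + g k η) := by
  classical
  -- pointwise bond identity
  have key : ∀ (k : Fin m), ∀ x ∈ Λs k, ∀ (i : Fin d) (η : (Fin d → ℤ) → Bool),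
      ((affineFn (plusF Λ) p (exchange x (x + unitVec d i) η) + ∑ j, g j (exchange x (x + unitVec d i) η)) -
        (affineFn (plusF Λ) p η + ∑ j, g j η)) =
      ((affineFn (plusF (Λs k)) p (exchange x (x + unitVec d i) η) + g k (exchange x (x + unitVec d i) η)) -
        (affineFn (plusF (Λs k)) p η + g k η)) := by
    intro k x hxk i η
    have hxΛ : x ∈ Λ := by
      rw [hcover]; exact Finset.mem_biUnion.2 ⟨k, Finset.mem_univ k, hxk⟩
    set y := x + unitVec d i with hy
    have hxy : x ≠ y := ne_add_unitVec x i
    have hgj : ∀ j, j ≠ k → g j (exchange x y η) = g j η := by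
      intro j hjk
      refine local_exchange (hg j) ?_ ?_ η
      · intro hx
        exact (Finset.disjoint_left.1 (hdisj hjk)) (interiorF_subset _ hx) hxk
      · intro hyin
        have h2 : y - unitVec d i ∈ Λs j := by
          rw [interiorF, Finset.mem_filter] at hyin
          exact (hyin.2 i).2
        rw [hy, add_sub_unitVec] at h2
        exact (Finset.disjoint_left.1 (hdisj hjk)) h2 hxk
    have hsum : (∑ j, g j (exchange x y η)) - (∑ j, g j η) = g k (exchange x y η) - g k η := by
      rw [← Finset.sum_sub_distrib]
      rw [Finset.sum_eq_single k]
      · intro j _ hjk; rw [hgj j hjk, sub_self]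
      · intro h; exact absurd (Finset.mem_univ k) h
    have haff : affineFn (plusF Λ) p (exchange x y η) - affineFn (plusF Λ) p η =
        affineFn (plusF (Λs k)) p (exchange x y η) - affineFn (plusF (Λs k)) p η := by
      rw [affine_exchange_sub (plusF Λ) p (mem_plusF_self hxΛ) (hy ▸ mem_plusF_add hxΛ i) hxy,
        affine_exchange_sub (plusF (Λs k)) p (mem_plusF_self hxk) (hy ▸ mem_plusF_add hxk i) hxy]
    have := hsum
    nlinarith [haff, hsum]
  -- energy computation
  unfold dirichletEnergy
  have hdisj' : Set.PairwiseDisjoint (↑(Finset.univ : Finset (Fin m))) Λs :=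
    fun i _ j _ hij => hdisj hij
  rw [hcover, Finset.sum_biUnion hdisj']
  rw [Finset.mul_sum]
  rw [← hcover]
  refine Finset.sum_congr rfl fun k _ => ?_
  have hinner : ∀ x ∈ Λs k, ∀ i : Fin d,
      (∫ η, (1/2) * c x i η *
        ((fun η => affineFn (plusF Λ) p η + ∑ j, g j η) (exchange x (x + unitVec d i) η) -
         (fun η => affineFn (plusF Λ) p η + ∑ j, g j η) η) ^ 2 ∂μ) =
      (∫ η, (1/2) * c x i η *
        ((fun η => affineFn (plusF (Λs k)) p η + g k η) (exchange x (x + unitVec d i) η) -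
         (fun η => affineFn (plusF (Λs k)) p η + g k η) η) ^ 2 ∂μ) := by
    intro x hx i
    congr 1
    funext η
    rw [key k x hx i η]
  rw [Finset.sum_congr rfl fun x hx => Finset.sum_congr rfl fun i _ => hinner x hx i]
  -- now scalar algebra
  by_cases hk0 : (Λs k).card = 0
  · rw [Finset.card_eq_zero.1 hk0]
    simp
  · have hΛ0 : (0:ℝ) < (Λ.card : ℝ) := by
      have : Λs k ⊆ Λ := by
        rw [hcover]; intro u hu; exact Finset.mem_biUnion.2 ⟨k, Finset.mem_univ k, hu⟩
      have h1 : 0 < (Λs k).card := Nat.pos_of_ne_zero hk0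
      have h2 : 0 < Λ.card := lt_of_lt_of_le h1 (Finset.card_le_card this)
      exact_mod_cast h2
    have hχ : (ρ * (1 - ρ)) ≠ 0 := by
      have hA : (0:ℝ) < ρ := hρ.1
      have hB : ρ < 1 := hρ.2
      have : (0:ℝ) < ρ * (1 - ρ) := by nlinarith
      exact ne_of_gt this
    have hk0' : ((Λs k).card : ℝ) ≠ 0 := by exact_mod_cast hk0
    field_simp

lemma nubar_le_sum (ρ : ℝ) (hρ : ρ ∈ Set.Ioo (0:ℝ) 1) (μ : Measure ((Fin d → ℤ) → Bool))
    (c : (Fin d → ℤ) → Fin d → ((Fin d → ℤ) → Bool) → ℝ)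
    (hc : ∀ x i η, 1 ≤ c x i η)
    (Λ : Finset (Fin d → ℤ)) (m : ℕ) (Λs : Fin m → Finset (Fin d → ℤ))
    (hdisj : Pairwise fun i j => Disjoint (Λs i) (Λs j))
    (hcover : Λ = Finset.univ.biUnion Λs) (p : Fin d → ℝ) :
    nubar ρ μ c Λ p ≤
      ∑ i : Fin m, (((Λs i).card : ℝ) / (Λ.card : ℝ)) * nubar ρ μ c (Λs i) p := by
  classical
  by_cases hΛ0 : Λ.card = 0
  · -- empty case
    have hΛe : Λ = ∅ := Finset.card_eq_zero.1 hΛ0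
    have hL : nubar ρ μ c Λ p ≤ 0 := by
      refine csInf_le (nubarSet_bddBelow ρ hρ μ c hc Λ p) ⟨fun _ => 0, fun _ _ _ => rfl, ?_⟩
      rw [hΛe]
      unfold dirichletEnergy
      simp
    have hR : ∀ k : Fin m, (Λs k).card = 0 := by
      intro k
      have : Λs k ⊆ Λ := by
        rw [hcover]; intro u hu; exact Finset.mem_biUnion.2 ⟨k, Finset.mem_univ k, hu⟩
      have := Finset.card_le_card this
      omega
    calc nubar ρ μ c Λ p ≤ 0 := hL
      _ = ∑ i : Fin m, (((Λs i).card : ℝ) / (Λ.card : ℝ)) * nubar ρ μ c (Λs i) p :=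
          (Finset.sum_eq_zero fun i _ => by rw [hR i]; norm_num).symm
  · refine le_of_forall_pos_le_add fun ε hε => ?_
    have hex : ∀ k : Fin m, ∃ g : ((Fin d → ℤ) → Bool) → ℝ,
        (∀ η η', (∀ x ∈ interiorF (Λs k), η x = η' x) → g η = g η') ∧
        dirichletEnergy ρ μ c (Λs k) (fun η => affineFn (plusF (Λs k)) p η + g η) <
          nubar ρ μ c (Λs k) p + ε := by
      intro k
      have h := exists_lt_of_csInf_lt (nubarSet_nonempty ρ μ c (Λs k) p)
        (lt_add_of_pos_right (nubar ρ μ c (Λs k) p) hε)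
      obtain ⟨r, ⟨g, hloc, rfl⟩, hlt⟩ := h
      exact ⟨g, hloc, hlt⟩
    choose g hloc hlt using hex
    have hglue := energy_glue ρ hρ μ c Λ m Λs hdisj hcover p g hloc
    have hsub : ∀ k, Λs k ⊆ Λ := by
      intro k; rw [hcover]; intro u hu; exact Finset.mem_biUnion.2 ⟨k, Finset.mem_univ k, hu⟩
    have hmem : dirichletEnergy ρ μ c Λ
        (fun η => affineFn (plusF Λ) p η + ∑ k, g k η) ∈
        {r : ℝ | ∃ g' : ((Fin d → ℤ) → Bool) → ℝ,
          (∀ η η', (∀ x ∈ interiorF Λ, η x = η' x) → g' η = g' η') ∧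
          r = dirichletEnergy ρ μ c Λ (fun η => affineFn (plusF Λ) p η + g' η)} := by
      refine ⟨fun η => ∑ k, g k η, ?_, rfl⟩
      intro η η' hagree
      refine Finset.sum_congr rfl fun k _ => ?_
      exact hloc k η η' fun x hx => hagree x (interiorF_mono (hsub k) hx)
    have h1 : nubar ρ μ c Λ p ≤ dirichletEnergy ρ μ c Λ
        (fun η => affineFn (plusF Λ) p η + ∑ k, g k η) :=
      csInf_le (nubarSet_bddBelow ρ hρ μ c hc Λ p) hmem
    rw [hglue] at h1
    have hcards : ∑ k : Fin m, ((Λs k).card : ℝ) = (Λ.card : ℝ) := by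
      rw [hcover, Finset.card_biUnion (fun i _ j _ hij => hdisj hij)]
      push_cast; rfl
    have hΛpos : (0:ℝ) < (Λ.card : ℝ) := by
      have : 0 < Λ.card := Nat.pos_of_ne_zero hΛ0
      exact_mod_cast this
    have h2 : ∑ k : Fin m, (((Λs k).card : ℝ) / (Λ.card : ℝ)) *
        dirichletEnergy ρ μ c (Λs k) (fun η => affineFn (plusF (Λs k)) p η + g k η) ≤
        ∑ k : Fin m, (((Λs k).card : ℝ) / (Λ.card : ℝ)) * (nubar ρ μ c (Λs k) p + ε) := by
      refine Finset.sum_le_sum fun k _ => ?_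
      exact mul_le_mul_of_nonneg_left (le_of_lt (hlt k))
        (div_nonneg (Nat.cast_nonneg _) (Nat.cast_nonneg _))
    have h3 : ∑ k : Fin m, (((Λs k).card : ℝ) / (Λ.card : ℝ)) * (nubar ρ μ c (Λs k) p + ε) =
        (∑ k : Fin m, (((Λs k).card : ℝ) / (Λ.card : ℝ)) * nubar ρ μ c (Λs k) p) + ε := by
      rw [Finset.sum_congr rfl fun k _ => mul_add _ _ _, Finset.sum_add_distrib]
      congr 1
      have he : ∑ k : Fin m, ((Λs k).card : ℝ) / (Λ.card : ℝ) * ε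
          = (∑ k : Fin m, ((Λs k).card : ℝ)) * (ε / (Λ.card : ℝ)) := by
        rw [Finset.sum_mul]
        exact Finset.sum_congr rfl fun k _ => by ring
      rw [he, hcards]
      field_simp
    linarith


variable {d : ℕ}

lemma shift_add_assoc (z x : Fin d → ℤ) (i : Fin d) :
    z + x + unitVec d i = z + (x + unitVec d i) := add_assoc z x _

lemma wsum_add_unitVec (p : Fin d → ℝ) (u : Fin d → ℤ) (i : Fin d) :
    (∑ j, p j * (((u + unitVec d i) j : ℤ) : ℝ)) = (∑ j, p j * ((u j : ℤ) : ℝ)) + p i := by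
  have : ∀ j, p j * (((u + unitVec d i) j : ℤ) : ℝ) =
      p j * ((u j : ℤ) : ℝ) + (if j = i then p j else 0) := by
    intro j
    by_cases h : j = i <;> simp [unitVec, h] <;> ring
  rw [Finset.sum_congr rfl fun j _ => this j, Finset.sum_add_distrib,
    Finset.sum_ite_eq' Finset.univ i p]
  simp

lemma shift_exchange (z x : Fin d → ℤ) (i : Fin d) (η : (Fin d → ℤ) → Bool) :
    shiftConf z (exchange (z + x) (z + x + unitVec d i) η) =
      exchange x (x + unitVec d i) (shiftConf z η) := by
  funext y
  show exchange (z + x) (z + x + unitVec d i) η (z + y) = _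
  unfold exchange shiftConf
  by_cases h1 : y = x
  · subst h1
    rw [if_pos rfl, if_pos rfl, shift_add_assoc]
  · have h1' : ¬(z + y = z + x) := fun h => h1 (add_right_injective z h)
    rw [if_neg h1', if_neg h1]
    by_cases h2 : y = x + unitVec d i
    · subst h2
      rw [if_pos (shift_add_assoc z x i).symm, if_pos rfl]
    · have h2' : ¬(z + y = z + x + unitVec d i) := by
        rw [shift_add_assoc]
        exact fun h => h2 (add_right_injective z h)
      rw [if_neg h2', if_neg h2]

lemma mem_image_shift {Λ : Finset (Fin d → ℤ)} {z x : Fin d → ℤ} (hx : x ∈ Λ) :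
    z + x ∈ Λ.image (z + ·) := Finset.mem_image.2 ⟨x, hx, rfl⟩

lemma interiorF_shift_mem {Λ : Finset (Fin d → ℤ)} {z y : Fin d → ℤ}
    (hy : y ∈ interiorF Λ) : z + y ∈ interiorF (Λ.image (z + ·)) := by
  rw [interiorF, Finset.mem_filter] at hy ⊢
  refine ⟨mem_image_shift hy.1, fun i => ⟨?_, ?_⟩⟩
  · rw [shift_add_assoc]
    exact mem_image_shift (hy.2 i).1
  · have : z + y - unitVec d i = z + (y - unitVec d i) := by
      funext j; simp [Pi.add_apply, Pi.sub_apply]; ring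
    rw [this]
    exact mem_image_shift (hy.2 i).2

lemma nubarSet_shift_subset (ρ : ℝ) (μ : Measure ((Fin d → ℤ) → Bool))
    (hμ : IsBernoulliProduct ρ μ)
    (c : (Fin d → ℤ) → Fin d → ((Fin d → ℤ) → Bool) → ℝ)
    (hc_meas : ∀ x i, Measurable (c x i))
    (hc_hom : ∀ (x : Fin d → ℤ) (i : Fin d) (η : (Fin d → ℤ) → Bool),
      c x i η = c 0 i (fun y => η (x + y)))
    (z : Fin d → ℤ) (Λ : Finset (Fin d → ℤ)) (p : Fin d → ℝ) :
    {r : ℝ | ∃ g : ((Fin d → ℤ) → Bool) → ℝ,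
      (∀ η η', (∀ x ∈ interiorF Λ, η x = η' x) → g η = g η') ∧
      r = dirichletEnergy ρ μ c Λ (fun η => affineFn (plusF Λ) p η + g η)} ⊆
    {r : ℝ | ∃ g : ((Fin d → ℤ) → Bool) → ℝ,
      (∀ η η', (∀ x ∈ interiorF (Λ.image (z + ·)), η x = η' x) → g η = g η') ∧
      r = dirichletEnergy ρ μ c (Λ.image (z + ·))
        (fun η => affineFn (plusF (Λ.image (z + ·))) p η + g η)} := by
  classical
  rintro r ⟨g, hg, rfl⟩
  set Λ' := Λ.image (z + ·) with hΛ'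
  refine ⟨fun η => g (shiftConf z η), ?_, ?_⟩
  · intro η η' hagree
    refine hg _ _ fun y hy => ?_
    exact hagree (z + y) (interiorF_shift_mem hy)
  · set v : ((Fin d → ℤ) → Bool) → ℝ := fun η => affineFn (plusF Λ) p η + g η with hv
    have hv_meas : Measurable v := (measurable_affineFn _ _).add (measurable_local hg)
    unfold dirichletEnergy
    have hcard : Λ'.card = Λ.card :=
      Finset.card_image_of_injective _ (add_right_injective z)
    rw [hcard]
    congr 1
    rw [hΛ', Finset.sum_image (fun a _ b _ h => add_right_injective z h)]
    refine Finset.sum_congr rfl fun x hx => Finset.sum_congr rfl fun i _ => ?_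
    -- integrand identity and change of variables
    set I : ((Fin d → ℤ) → Bool) → ℝ := fun ξ =>
      (1/2) * c x i ξ * (v (exchange x (x + unitVec d i) ξ) - v ξ) ^ 2 with hI
    have hI_meas : Measurable I := by
      refine (((hc_meas x i).const_mul (1/2)).mul ?_)
      exact ((hv_meas.comp (measurable_exchange _ _)).sub hv_meas).pow_const 2
    have hpt : ∀ η, (1/2) * c (z + x) i η *
        ((affineFn (plusF Λ') p (exchange (z + x) (z + x + unitVec d i) η) +
            g (shiftConf z (exchange (z + x) (z + x + unitVec d i) η))) -
          (affineFn (plusF Λ') p η + g (shiftConf z η))) ^ 2 = I (shiftConf z η) := by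
      intro η
      have hc' : c (z + x) i η = c x i (shiftConf z η) := by
        rw [hc_hom (z + x) i η, hc_hom x i (shiftConf z η)]
        congr 1
        funext y
        show η (z + x + y) = η (z + (x + y))
        rw [add_assoc]
      have hxy : (z + x) ≠ (z + x) + unitVec d i := ne_add_unitVec _ i
      have hxy2 : x ≠ x + unitVec d i := ne_add_unitVec _ i
      have hzxΛ' : z + x ∈ Λ' := mem_image_shift hx
      have haff1 := affine_exchange_sub (plusF Λ') p (mem_plusF_self hzxΛ')
        (mem_plusF_add hzxΛ' i) hxy η
      have haff2 := affine_exchange_sub (plusF Λ) p (mem_plusF_self hx)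
        (mem_plusF_add hx i) hxy2 (shiftConf z η)
      have hw1 : (∑ j, p j * ((((z + x) + unitVec d i) j : ℤ) : ℝ)) =
          (∑ j, p j * (((z + x) j : ℤ) : ℝ)) + p i := wsum_add_unitVec p (z + x) i
      have hw2 : (∑ j, p j * (((x + unitVec d i) j : ℤ) : ℝ)) =
          (∑ j, p j * ((x j : ℤ) : ℝ)) + p i := wsum_add_unitVec p x i
      have hse := shift_exchange z x i η
      have hgpart : g (shiftConf z (exchange (z + x) (z + x + unitVec d i) η)) =
          g (exchange x (x + unitVec d i) (shiftConf z η)) := by rw [hse]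
      have hη1 : η (z + x + unitVec d i) = shiftConf z η (x + unitVec d i) := by
        show η (z + x + unitVec d i) = η (z + (x + unitVec d i))
        rw [add_assoc]
      have hη2 : η (z + x) = shiftConf z η x := rfl
      have hdiff : (affineFn (plusF Λ') p (exchange (z + x) (z + x + unitVec d i) η) +
            g (shiftConf z (exchange (z + x) (z + x + unitVec d i) η))) -
          (affineFn (plusF Λ') p η + g (shiftConf z η)) =
          (v (exchange x (x + unitVec d i) (shiftConf z η)) - v (shiftConf z η)) := by
        rw [hgpart, hv]
        have e1 : affineFn (plusF Λ') p (exchange (z + x) (z + x + unitVec d i) η) -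
            affineFn (plusF Λ') p η =
            affineFn (plusF Λ) p (exchange x (x + unitVec d i) (shiftConf z η)) -
            affineFn (plusF Λ) p (shiftConf z η) := by
          rw [haff1, haff2, hw1, hw2, hη1, hη2]
          ring
        simp only []
        linarith [e1]
      rw [hI, hc', hdiff]
    rw [show (∫ η, (1/2) * c (z + x) i η *
        ((affineFn (plusF Λ') p (exchange (z + x) (z + x + unitVec d i) η) +
            g (shiftConf z (exchange (z + x) (z + x + unitVec d i) η))) -
          (affineFn (plusF Λ') p η + g (shiftConf z η))) ^ 2 ∂μ) =
        ∫ η, I (shiftConf z η) ∂μ from integral_congr_ae (Filter.Eventually.of_forall hpt)]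
    rw [← integral_map (measurable_shiftConf z).aemeasurable
      (hI_meas.aestronglyMeasurable)]
    rw [map_shiftConf_eq hμ z]

lemma image_shift_shift (z : Fin d → ℤ) (Λ : Finset (Fin d → ℤ)) :
    (Λ.image (z + ·)).image ((-z) + ·) = Λ := by
  classical
  rw [Finset.image_image]
  have : ((-z + ·) ∘ (z + ·)) = id := by
    funext x; simp [Function.comp]
  rw [this, Finset.image_id]

lemma nubar_shift (ρ : ℝ) (hρ : ρ ∈ Set.Ioo (0:ℝ) 1) (μ : Measure ((Fin d → ℤ) → Bool))
    (hμ : IsBernoulliProduct ρ μ)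
    (c : (Fin d → ℤ) → Fin d → ((Fin d → ℤ) → Bool) → ℝ)
    (hc_meas : ∀ x i, Measurable (c x i)) (hc : ∀ x i η, 1 ≤ c x i η)
    (hc_hom : ∀ (x : Fin d → ℤ) (i : Fin d) (η : (Fin d → ℤ) → Bool),
      c x i η = c 0 i (fun y => η (x + y)))
    (z : Fin d → ℤ) (Λ : Finset (Fin d → ℤ)) (p : Fin d → ℝ) :
    nubar ρ μ c (Λ.image (z + ·)) p = nubar ρ μ c Λ p := by
  have h1 := nubarSet_shift_subset ρ μ hμ c hc_meas hc_hom z Λ p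
  have h2 := nubarSet_shift_subset ρ μ hμ c hc_meas hc_hom (-z) (Λ.image (z + ·)) p
  rw [image_shift_shift] at h2
  unfold nubar
  exact le_antisymm
    (csInf_le_csInf (nubarSet_bddBelow ρ hρ μ c hc (Λ.image (z + ·)) p)
      (nubarSet_nonempty ρ μ c Λ p) h1)
    (csInf_le_csInf (nubarSet_bddBelow ρ hρ μ c hc Λ p)
      (nubarSet_nonempty ρ μ c (Λ.image (z + ·)) p) h2)


variable {d : ℕ}

lemma balanced_dec (P k : ℤ) (hP : 0 < P) (hodd : P % 2 = 1)
    (h1 : -(3*P) < 2*k) (h2 : 2*k < 3*P) :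
    ∃ t a : ℤ, -1 ≤ t ∧ t ≤ 1 ∧ -P < 2*a ∧ 2*a < P ∧ k = P * t + a := by
  have hq := Int.mul_ediv_add_emod k P
  have hr0 : 0 ≤ k % P := Int.emod_nonneg k (ne_of_gt hP)
  have hrP : k % P < P := Int.emod_lt_of_pos k hP
  set q := k / P with hqdef
  set r := k % P with hrdef
  by_cases hcase : 2*r < P
  · refine ⟨q, r, ?_, ?_, by omega, hcase, by omega⟩
    · by_contra h; push_neg at h
      have hq2 : q ≤ -2 := by omega
      have h3 : P * q ≤ P * (-2) := mul_le_mul_of_nonneg_left hq2 hP.le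
      have h4 : P * (-2) = -2 * P := by ring
      omega
    · by_contra h; push_neg at h
      have hq2 : 2 ≤ q := by omega
      have h3 : P * 2 ≤ P * q := mul_le_mul_of_nonneg_left hq2 hP.le
      have h4 : P * 2 = 2 * P := by ring
      omega
  · push_neg at hcase
    have hne : 2*r ≠ P := by omega
    refine ⟨q + 1, r - P, ?_, ?_, by omega, by omega, by ring_nf; omega⟩
    · by_contra h; push_neg at h
      have hq2 : q ≤ -3 := by omega
      have h3 : P * q ≤ P * (-3) := mul_le_mul_of_nonneg_left hq2 hP.le
      have h4 : P * (-3) = -3 * P := by ring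
      omega
    · by_contra h; push_neg at h
      have hq2 : 1 ≤ q := by omega
      have h3 : P * 1 ≤ P * q := mul_le_mul_of_nonneg_left hq2 hP.le
      have h4 : P * 1 = P := by ring
      omega

lemma balanced_comp (P t a : ℤ) (hP : 0 < P) (ht1 : -1 ≤ t) (ht2 : t ≤ 1)
    (ha1 : -P < 2*a) (ha2 : 2*a < P) :
    -(3*P) < 2*(P*t + a) ∧ 2*(P*t + a) < 3*P := by
  have h3 : P * (-1) ≤ P * t := mul_le_mul_of_nonneg_left ht1 hP.le
  have h4 : P * t ≤ P * 1 := mul_le_mul_of_nonneg_left ht2 hP.le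
  have h5 : P * (-1) = -P := by ring
  have h6 : P * 1 = P := by ring
  constructor <;> omega

lemma mem_cube_iff (n : ℕ) (x : Fin d → ℤ) :
    x ∈ triadicCubeF d n ↔ ∀ j, -(3^n:ℤ) < 2 * x j ∧ 2 * x j < 3^n := by
  rw [triadicCubeF, Fintype.mem_piFinset]
  have hP : (0:ℤ) < 3^n := by positivity
  constructor
  · intro h j
    have := h j
    rw [Finset.mem_filter] at this
    exact this.2
  · intro h j
    rw [Finset.mem_filter, Finset.mem_Icc]
    refine ⟨?_, h j⟩
    have := h j
    omega

def zvec (n : ℕ) (w : Fin d → Fin 3) : Fin d → ℤ := fun j => 3^n * ((w j : ℤ) - 1)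

lemma odd_pow3 (n : ℕ) : ∃ c : ℤ, 0 ≤ c ∧ (3:ℤ)^n = 2*c + 1 := by
  have : Odd ((3:ℤ)^n) := Odd.pow ⟨1, by norm_num⟩
  obtain ⟨c, hc⟩ := this
  have hP : (0:ℤ) < 3^n := by positivity
  exact ⟨c, by omega, by omega⟩

lemma zvec_disjoint (n : ℕ) {w w' : Fin d → Fin 3} (hww : w ≠ w') :
    Disjoint ((triadicCubeF d n).image (zvec n w + ·))
      ((triadicCubeF d n).image (zvec n w' + ·)) := by
  classical
  rw [Finset.disjoint_left]
  rintro u hu hu'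
  obtain ⟨a, ha, rfl⟩ := Finset.mem_image.1 hu
  obtain ⟨b, hb, heq⟩ := Finset.mem_image.1 hu'
  obtain ⟨j, hj⟩ := Function.ne_iff.1 hww
  have ha' := (mem_cube_iff n a).1 ha j
  have hb' := (mem_cube_iff n b).1 hb j
  have hco := congrFun heq j
  have hco' : (3:ℤ)^n * ((w' j : ℤ) - 1) + b j = 3^n * ((w j : ℤ) - 1) + a j := hco
  set P : ℤ := 3^n with hPd
  have hP : (0:ℤ) < P := by positivity
  set t : ℤ := (w j : ℤ) - 1
  set t' : ℤ := (w' j : ℤ) - 1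
  have htt : t = t' := by
    rcases lt_trichotomy t t' with h | h | h
    · have h3 : P * (t + 1) ≤ P * t' := mul_le_mul_of_nonneg_left (by omega) hP.le
      have h4 : P * (t + 1) = P * t + P := by ring
      omega
    · exact h
    · have h3 : P * (t' + 1) ≤ P * t := mul_le_mul_of_nonneg_left (by omega) hP.le
      have h4 : P * (t' + 1) = P * t' + P := by ring
      omega
  have : (w j : ℤ) = (w' j : ℤ) := by omega
  exact hj (Fin.ext (by exact_mod_cast this))

lemma cube_cover (n : ℕ) :
    triadicCubeF d (n+1) = Finset.univ.biUnion
      (fun i : Fin (3^d) => (triadicCubeF d n).image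
        (zvec n (finFunctionFinEquiv.symm i) + ·)) := by
  classical
  ext x
  rw [Finset.mem_biUnion, mem_cube_iff]
  constructor
  · intro h
    have hP : (0:ℤ) < 3^n := by positivity
    obtain ⟨c, hc0, hc⟩ := odd_pow3 n
    have hdec : ∀ j, ∃ t a : ℤ, -1 ≤ t ∧ t ≤ 1 ∧ -(3^n:ℤ) < 2*a ∧ 2*a < 3^n ∧
        x j = 3^n * t + a := by
      intro j
      have h1 := (h j).1
      have h2 := (h j).2
      refine balanced_dec (3^n) (x j) hP (by omega) ?_ ?_
      · rw [show (3:ℤ) * 3^n = 3^(n+1) by ring]; exact h1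
      · rw [show (3:ℤ) * 3^n = 3^(n+1) by ring]; exact h2
    choose t a ht1 ht2 ha1 ha2 hxe using hdec
    set w : Fin d → Fin 3 := fun j => ⟨(t j + 1).toNat, by have := ht1 j; have := ht2 j; omega⟩
    refine ⟨finFunctionFinEquiv w, Finset.mem_univ _, ?_⟩
    rw [Equiv.symm_apply_apply]
    refine Finset.mem_image.2 ⟨a, (mem_cube_iff n a).2 fun j => ⟨ha1 j, ha2 j⟩, ?_⟩
    funext j
    show zvec n w j + a j = x j
    unfold zvec
    have hwj : ((w j : ℕ) : ℤ) = t j + 1 := by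
      show (((t j + 1).toNat : ℕ) : ℤ) = t j + 1
      have := ht1 j
      omega
    rw [hwj, hxe j]
    ring
  · rintro ⟨i, -, hx⟩ j
    obtain ⟨a, ha, rfl⟩ := Finset.mem_image.1 hx
    have ha' := (mem_cube_iff n a).1 ha j
    have hP : (0:ℤ) < 3^n := by positivity
    have := balanced_comp (3^n) ((finFunctionFinEquiv.symm i j : ℤ) - 1) (a j) hP
      (by omega) (by omega) ha'.1 ha'.2
    have hpow : (3:ℤ) * 3^n = 3^(n+1) := by ring
    have hco : (zvec n (finFunctionFinEquiv.symm i) + a) j =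
        3^n * ((finFunctionFinEquiv.symm i j : ℤ) - 1) + a j := rfl
    rw [hco]
    omega

lemma line_card (n : ℕ) :
    (((Finset.Icc (-(3 ^ n : ℤ)) (3 ^ n : ℤ)).filter fun k =>
      -(3 ^ n : ℤ) < 2 * k ∧ 2 * k < (3 ^ n : ℤ)).card) = 3^n := by
  obtain ⟨c, hc0, hc⟩ := odd_pow3 n
  have hset : ((Finset.Icc (-(3 ^ n : ℤ)) (3 ^ n : ℤ)).filter fun k =>
      -(3 ^ n : ℤ) < 2 * k ∧ 2 * k < (3 ^ n : ℤ)) = Finset.Icc (-c) c := by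
    ext k
    rw [Finset.mem_filter, Finset.mem_Icc, Finset.mem_Icc]
    omega
  rw [hset, Int.card_Icc]
  have : ((3^n : ℕ) : ℤ) = 2*c + 1 := by push_cast; omega
  omega

lemma cube_card (n : ℕ) : (triadicCubeF d n).card = 3^(n*d) := by
  rw [triadicCubeF, Fintype.card_piFinset]
  rw [Finset.prod_congr rfl fun j _ => line_card n]
  rw [Finset.prod_const, Finset.card_univ, Fintype.card_fin]
  rw [← pow_mul]

end Nsub


/-- Proposition 4.1 (4), subadditivity of the finite-volume conductivity functional:
for every partition `Λ = Λ_1 ⊔ ⋯ ⊔ Λ_m`,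
`ν̄(ρ,Λ,p) ≤ Σᵢ (|Λᵢ|/|Λ|) ν̄(ρ,Λᵢ,p)`; in particular (using the spatial homogeneity of
the rates), `n ↦ ν̄(ρ,□_n,p)` is nonincreasing along triadic cubes. -/
theorem nubar_subadditive {d : ℕ} (ρ lam : ℝ) (hρ : ρ ∈ Set.Ioo (0 : ℝ) 1)
    (hlam : 1 ≤ lam)
    (μ : Measure ((Fin d → ℤ) → Bool)) (hμ : IsBernoulliProduct ρ μ)
    (c : (Fin d → ℤ) → Fin d → ((Fin d → ℤ) → Bool) → ℝ)
    (hc_meas : ∀ x i, Measurable (c x i))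
    (hc_bdd : ∀ x i η, 1 ≤ c x i η ∧ c x i η ≤ lam)
    (hc_hom : ∀ (x : Fin d → ℤ) (i : Fin d) (η : (Fin d → ℤ) → Bool),
      c x i η = c 0 i (fun y => η (x + y)))
    (Λ : Finset (Fin d → ℤ)) (m : ℕ) (Λs : Fin m → Finset (Fin d → ℤ))
    (hdisj : Pairwise fun i j => Disjoint (Λs i) (Λs j))
    (hcover : Λ = Finset.univ.biUnion Λs) (p : Fin d → ℝ) :
    nubar ρ μ c Λ p ≤
        ∑ i : Fin m, (((Λs i).card : ℝ) / (Λ.card : ℝ)) * nubar ρ μ c (Λs i) p ∧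
      ∀ n : ℕ, nubar ρ μ c (triadicCubeF d (n + 1)) p ≤ nubar ρ μ c (triadicCubeF d n) p := by
  classical
  have hc1 : ∀ x i η, 1 ≤ c x i η := fun x i η => (hc_bdd x i η).1
  constructor
  · exact Nsub.nubar_le_sum ρ hρ μ c hc1 Λ m Λs hdisj hcover p
  · intro n
    set e := (finFunctionFinEquiv : (Fin d → Fin 3) ≃ Fin (3^d)) with he
    set Λs' : Fin (3^d) → Finset (Fin d → ℤ) :=
      fun i => (triadicCubeF d n).image (Nsub.zvec n (e.symm i) + ·) with hΛs'
    have hdisj' : Pairwise fun i j => Disjoint (Λs' i) (Λs' j) := by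
      intro i j hij
      refine Nsub.zvec_disjoint n fun h => hij ?_
      rw [← Equiv.apply_symm_apply e i, ← Equiv.apply_symm_apply e j, h]
    have hcover' : triadicCubeF d (n+1) = Finset.univ.biUnion Λs' := Nsub.cube_cover n
    have h1 := Nsub.nubar_le_sum ρ hρ μ c hc1 (triadicCubeF d (n+1)) (3^d) Λs'
      hdisj' hcover' p
    have hterm : ∀ i : Fin (3^d),
        ((Λs' i).card : ℝ) / ((triadicCubeF d (n+1)).card : ℝ) * nubar ρ μ c (Λs' i) p
        = ((3:ℝ)^(n*d) / (3:ℝ)^((n+1)*d)) * nubar ρ μ c (triadicCubeF d n) p := by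
      intro i
      have hcard : (Λs' i).card = 3^(n*d) := by
        rw [hΛs']
        simp only []
        rw [Finset.card_image_of_injective _ (add_right_injective _), Nsub.cube_card]
      have hsh : nubar ρ μ c (Λs' i) p = nubar ρ μ c (triadicCubeF d n) p :=
        Nsub.nubar_shift ρ hρ μ hμ c hc_meas hc1 hc_hom _ _ p
      rw [hcard, hsh, Nsub.cube_card]
      push_cast
      ring
    calc nubar ρ μ c (triadicCubeF d (n+1)) p
        ≤ ∑ i : Fin (3^d), ((Λs' i).card : ℝ) / ((triadicCubeF d (n+1)).card : ℝ) *
            nubar ρ μ c (Λs' i) p := h1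
      _ = ∑ _i : Fin (3^d), ((3:ℝ)^(n*d) / (3:ℝ)^((n+1)*d)) *
            nubar ρ μ c (triadicCubeF d n) p := Finset.sum_congr rfl fun i _ => hterm i
      _ = nubar ρ μ c (triadicCubeF d n) p := by
          rw [Finset.sum_const, Finset.card_univ, Fintype.card_fin, nsmul_eq_mul]
          rw [show (n+1)*d = n*d + d by ring, pow_add]
          have h3 : (0:ℝ) < (3:ℝ)^(n*d) := by positivity
          have h4 : (0:ℝ) < (3:ℝ)^d := by positivity
          push_cast
          field_simp
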